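/- Let d ≥ 1 and n ≥ 4 be integers and let X = {x_i : i ∈ {1,…,n}^d} where x_i = ((i_1 − 1/2)/n, …, (i_d − 1/2)/n). Let A' ⊆ (0,1)^d and η be such that 4/n ≤ η ≤ 1, set A = B(A', η) := {x ∈ ℝ^d : dist_∞(x, A') < η}, and suppose A ⊆ (0,1)^d. Then 8^{−d} n^d Vol(A) ≤ #(A ∩ X) ≤ 4^d n^d Vol(A), where Vol is the Lebesgue measure and # denotes cardinality. -/

import Mathlib

open MeasureTheory Set
open scoped ENNReal

noncomputable section

/-- Design points on the grid: `x_i = ((i_1+1/2)/n, …, (i_d+1/2)/n)` for `i : Fin d → Fin n`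
(0-based indexing, corresponding to `(i_k - 1/2)/n` for 1-based `i_k`). -/
def dpt (d n : ℕ) (i : Fin d → Fin n) : Fin d → ℝ := fun k => ((i k : ℝ) + 1 / 2) / n

private lemma upper_core (d n : ℕ) (hn : 4 ≤ n)
    (A' : Set (Fin d → ℝ)) (η : ℝ) (hη₁ : 4 / (n : ℝ) ≤ η)
    (A : Set (Fin d → ℝ)) (hA : A = Metric.thickening η A')
    (hAvol : volume A ≠ ⊤) :
    (Nat.card {i : Fin d → Fin n // dpt d n i ∈ A} : ℝ) * (1 / (2 * n)) ^ d
      ≤ (volume A).toReal := by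
  classical
  have hn0 : (0 : ℝ) < n := by positivity
  have hη0 : (0 : ℝ) < η := lt_of_lt_of_le (by positivity) hη₁
  set r : ℝ := 1 / (4 * n) with hr
  have hr0 : 0 < r := by positivity
  have hrη : r ≤ η := le_trans (by rw [hr]; rw [div_le_div_iff₀ (by positivity) hn0]; nlinarith) hη₁
  set t : ℝ := r / η with ht
  have ht0 : 0 ≤ t := by positivity
  have ht1 : t ≤ 1 := (div_le_one hη0).mpr hrη
  have htη : t * η = r := by rw [ht]; field_simp
  -- choose witnesses
  have H : ∀ i : Fin d → Fin n, dpt d n i ∈ A → ∃ y ∈ A', dist (dpt d n i) y < η := by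
    intro i hi
    rw [hA] at hi
    exact Metric.mem_thickening_iff.mp hi
  choose y hyA hyd using H
  set p : {i : Fin d → Fin n // dpt d n i ∈ A} → Fin d → ℝ :=
    fun i k => dpt d n i.1 k + t * (y i.1 i.2 k - dpt d n i.1 k) with hp
  set c : {i : Fin d → Fin n // dpt d n i ∈ A} → Set (Fin d → ℝ) :=
    fun i => Set.pi univ (fun k => Ioo (p i k - r) (p i k + r)) with hc
  have hcoord : ∀ i : {i : Fin d → Fin n // dpt d n i ∈ A}, ∀ k,
      |dpt d n i.1 k - y i.1 i.2 k| < η := by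
    intro i k
    have h1 : dist (dpt d n i.1 k) (y i.1 i.2 k) ≤ dist (dpt d n i.1) (y i.1 i.2) :=
      dist_le_pi_dist _ _ k
    have := lt_of_le_of_lt h1 (hyd i.1 i.2)
    rwa [Real.dist_eq] at this
  -- c i ⊆ A
  have hcA : ∀ i, c i ⊆ A := by
    intro i q hq
    rw [hA, Metric.mem_thickening_iff]
    refine ⟨y i.1 i.2, hyA i.1 i.2, ?_⟩
    rw [dist_pi_lt_iff hη0]
    intro k
    have hqk := hq k (mem_univ k)
    simp only [mem_Ioo] at hqk
    rw [Real.dist_eq]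
    have h1 : |q k - p i k| < r := by rw [abs_lt]; constructor <;> nlinarith [hqk.1, hqk.2]
    have h2 : |p i k - y i.1 i.2 k| ≤ (1 - t) * η := by
      have heq : p i k - y i.1 i.2 k = (1 - t) * (dpt d n i.1 k - y i.1 i.2 k) := by
        simp only [hp]; ring
      rw [heq, abs_mul, abs_of_nonneg (by linarith : (0:ℝ) ≤ 1 - t)]
      exact mul_le_mul_of_nonneg_left (le_of_lt (hcoord i k)) (by linarith)
    calc |q k - y i.1 i.2 k| ≤ |q k - p i k| + |p i k - y i.1 i.2 k| := abs_sub_le _ _ _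
      _ < r + (1 - t) * η := by linarith
      _ = η := by nlinarith [htη]
  -- c i inside the grid cell
  have hcell : ∀ i q, q ∈ c i → ∀ k, (i.1 k : ℝ) / n < q k ∧ q k < ((i.1 k : ℝ) + 1) / n := by
    intro i q hq k
    have hqk := hq k (mem_univ k)
    simp only [mem_Ioo] at hqk
    have h2 : |p i k - dpt d n i.1 k| ≤ r := by
      have heq : p i k - dpt d n i.1 k = t * (y i.1 i.2 k - dpt d n i.1 k) := by
        simp only [hp]; ring
      rw [heq, abs_mul, abs_of_nonneg ht0]
      calc t * |y i.1 i.2 k - dpt d n i.1 k| ≤ t * η := by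
            rw [abs_sub_comm]
            exact mul_le_mul_of_nonneg_left (le_of_lt (hcoord i k)) ht0
        _ = r := htη
    have hx : dpt d n i.1 k = ((i.1 k : ℝ) + 1 / 2) / n := rfl
    have habs : |q k - dpt d n i.1 k| < 2 * r := by
      calc |q k - dpt d n i.1 k| ≤ |q k - p i k| + |p i k - dpt d n i.1 k| := abs_sub_le _ _ _
        _ < r + r := by
            have : |q k - p i k| < r := by rw [abs_lt]; constructor <;> nlinarith [hqk.1, hqk.2]
            linarith
        _ = 2 * r := by ring
    rw [abs_lt, hx] at habs
    have h2r : 2 * r = 1 / (2 * n) := by rw [hr]; ring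
    rw [h2r] at habs
    constructor
    · rw [div_lt_iff₀ hn0]
      have h3 : ((i.1 k : ℝ) + 1/2) / n - 1/(2*n) < q k := by linarith [habs.1]
      calc (i.1 k : ℝ) = (((i.1 k : ℝ) + 1/2)/n - 1/(2*n)) * n := by field_simp; ring
        _ < q k * n := mul_lt_mul_of_pos_right h3 hn0
    · rw [lt_div_iff₀ hn0]
      have h3 : q k < ((i.1 k : ℝ) + 1/2)/n + 1/(2*n) := by linarith [habs.2]
      calc q k * n < (((i.1 k : ℝ) + 1/2)/n + 1/(2*n)) * n := mul_lt_mul_of_pos_right h3 hn0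
        _ = (i.1 k : ℝ) + 1 := by field_simp; ring
  -- disjointness
  have hdisj : ∀ i j : {i : Fin d → Fin n // dpt d n i ∈ A}, i ≠ j → Disjoint (c i) (c j) := by
    intro i j hij
    rw [Set.disjoint_left]
    intro q hqi hqj
    have hne : i.1 ≠ j.1 := fun h => hij (Subtype.ext h)
    obtain ⟨k, hk⟩ := Function.ne_iff.mp hne
    have h1 := hcell i q hqi k
    have h2 := hcell j q hqj k
    rcases lt_or_gt_of_ne hk with h | h
    · have hle : (i.1 k : ℝ) + 1 ≤ (j.1 k : ℝ) := by
        exact_mod_cast Nat.succ_le_of_lt (Fin.lt_iff_val_lt_val.mp h)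
      have : ((i.1 k : ℝ) + 1) / n ≤ (j.1 k : ℝ) / n := by gcongr
      linarith [h1.2, h2.1]
    · have hle : (j.1 k : ℝ) + 1 ≤ (i.1 k : ℝ) := by
        exact_mod_cast Nat.succ_le_of_lt (Fin.lt_iff_val_lt_val.mp h)
      have : ((j.1 k : ℝ) + 1) / n ≤ (i.1 k : ℝ) / n := by gcongr
      linarith [h2.2, h1.1]
  -- volume of each cube
  have hvolc : ∀ i, volume (c i) = ENNReal.ofReal (1 / (2 * n)) ^ d := by
    intro i
    rw [hc]
    rw [volume_pi_pi]
    have : ∀ k : Fin d, volume (Ioo (p i k - r) (p i k + r)) = ENNReal.ofReal (1 / (2 * n)) := by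
      intro k
      rw [Real.volume_Ioo]
      congr 1
      rw [hr]; ring
    simp only [this]
    rw [Finset.prod_const, Finset.card_univ, Fintype.card_fin]
  -- sum up
  have hmeas : ∀ i, MeasurableSet (c i) := by
    intro i
    exact MeasurableSet.univ_pi (fun k => measurableSet_Ioo)
  have hsum : ∑ i : {i : Fin d → Fin n // dpt d n i ∈ A}, volume (c i) ≤ volume A := by
    rw [← measure_biUnion_finset (f := c) (s := Finset.univ) ?_ (fun i _ => hmeas i)]
    · apply measure_mono
      intro q hq
      simp only [Finset.mem_coe, Set.mem_iUnion] at hq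
      obtain ⟨i, _, hqi⟩ := hq
      exact hcA i hqi
    · intro i _ j _ hij
      exact hdisj i j hij
  have hcard : (Nat.card {i : Fin d → Fin n // dpt d n i ∈ A} : ℝ≥0∞) *
      ENNReal.ofReal (1 / (2 * n)) ^ d ≤ volume A := by
    calc (Nat.card {i : Fin d → Fin n // dpt d n i ∈ A} : ℝ≥0∞) * ENNReal.ofReal (1 / (2 * n)) ^ d
        = ∑ i : {i : Fin d → Fin n // dpt d n i ∈ A}, volume (c i) := by
          simp only [hvolc, Finset.sum_const, Finset.card_univ, nsmul_eq_mul,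
            Nat.card_eq_fintype_card]
      _ ≤ volume A := hsum
  -- move to reals
  have hfin : (Nat.card {i : Fin d → Fin n // dpt d n i ∈ A} : ℝ≥0∞) *
      ENNReal.ofReal (1 / (2 * n)) ^ d ≠ ⊤ := by
    exact ENNReal.mul_ne_top (ENNReal.natCast_ne_top _) (ENNReal.pow_ne_top ENNReal.ofReal_ne_top)
  have := ENNReal.toReal_mono hAvol hcard
  rw [ENNReal.toReal_mul, ENNReal.toReal_pow, ENNReal.toReal_natCast,
    ENNReal.toReal_ofReal (by positivity)] at this
  exact this


set_option maxHeartbeats 1000000 in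
private lemma lower_core (d n : ℕ) (hn : 4 ≤ n)
    (A' : Set (Fin d → ℝ)) (hA' : ∀ x ∈ A', ∀ k, x k ∈ Set.Ioo (0 : ℝ) 1)
    (η : ℝ) (hη₁ : 4 / (n : ℝ) ≤ η)
    (A : Set (Fin d → ℝ)) (hA : A = Metric.thickening η A')
    (hAsub : ∀ x ∈ A, ∀ k, x k ∈ Set.Ioo (0 : ℝ) 1) :
    (n : ℝ) ^ d * (volume A).toReal ≤
      8 ^ d * (Nat.card {i : Fin d → Fin n // dpt d n i ∈ A} : ℝ) := by
  classical
  have hn0 : (0 : ℝ) < n := by positivity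
  have hη0 : (0 : ℝ) < η := lt_of_lt_of_le (by positivity) hη₁
  have hnη : (4 : ℝ) ≤ n * η := by
    rw [div_le_iff₀ hn0] at hη₁; linarith
  set m : ℕ := ⌊(n : ℝ) * η⌋₊ with hm
  have hm4 : 4 ≤ m := Nat.le_floor (by exact_mod_cast hnη)
  have hm0 : 0 < m := by omega
  have hmle : (m : ℝ) ≤ n * η := Nat.floor_le (by positivity)
  have hmgt : (n : ℝ) * η < m + 1 := Nat.lt_floor_add_one _
  have h3m : 3 * ((n : ℝ) * η) ≤ 4 * m := by linarith
  -- anchors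
  set f : (Fin d → ℝ) → (Fin d → ℤ) := fun x k => ⌊x k / η⌋ with hf
  set S : Set (Fin d → ℤ) := f '' A' with hS
  have hSfin : S.Finite := by
    apply Set.Finite.subset (Set.finite_Icc (fun _ : Fin d => (0 : ℤ)) (fun _ => ⌊1 / η⌋))
    rintro w ⟨y, hy, rfl⟩
    constructor <;> intro k
    · exact Int.floor_nonneg.mpr (div_nonneg (le_of_lt (hA' y hy k).1) hη0.le)
    · apply Int.floor_le_floor
      have h1 := (hA' y hy k).2
      apply div_le_div_of_nonneg_right (le_of_lt h1) hη0.le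
  set SF : Finset (Fin d → ℤ) := hSfin.toFinset with hSF
  -- basic anchor facts: if f y = w then η * w k ≤ y k < η * (w k + 1)
  have hanchor : ∀ y : Fin d → ℝ, ∀ k, η * (f y k) ≤ y k ∧ y k < η * (f y k) + η := by
    intro y k
    have h1 : (⌊y k / η⌋ : ℝ) ≤ y k / η := Int.floor_le _
    have h2 : y k / η < ⌊y k / η⌋ + 1 := Int.lt_floor_add_one _
    constructor
    · have := mul_le_mul_of_nonneg_left h1 hη0.le
      rw [mul_div_cancel₀ _ (ne_of_gt hη0)] at this
      exact this
    · have := mul_lt_mul_of_pos_left h2 hη0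
      rw [mul_div_cancel₀ _ (ne_of_gt hη0)] at this
      calc y k < η * ((⌊y k / η⌋ : ℝ) + 1) := this
        _ = η * (f y k) + η := by rw [hf]; ring
  -- covering: A ⊆ union of enlarged cubes
  have hcover : A ⊆ ⋃ w ∈ SF, Set.pi univ (fun k => Ioo (η * w k - η) (η * w k + 2 * η)) := by
    intro a ha
    rw [hA, Metric.mem_thickening_iff] at ha
    obtain ⟨y, hyA, hyd⟩ := ha
    have hwS : f y ∈ SF := by rw [hSF, Set.Finite.mem_toFinset]; exact ⟨y, hyA, rfl⟩
    refine Set.mem_biUnion hwS ?_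
    intro k _
    have h1 := hanchor y k
    have h2 : |a k - y k| < η := by
      have := lt_of_le_of_lt (dist_le_pi_dist a y k) hyd
      rwa [Real.dist_eq] at this
    rw [abs_lt] at h2
    simp only [mem_Ioo]
    constructor <;> nlinarith [h1.1, h1.2, h2.1, h2.2]
  -- volume bound
  have hvolA : (volume A).toReal ≤ (SF.card : ℝ) * (3 * η) ^ d := by
    have hv1 : volume A ≤ (SF.card : ℝ≥0∞) * ENNReal.ofReal (3 * η) ^ d := by
      calc volume A ≤ volume (⋃ w ∈ SF, Set.pi univ
            (fun k => Ioo (η * w k - η) (η * w k + 2 * η))) := measure_mono hcover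
        _ ≤ ∑ w ∈ SF, volume (Set.pi univ
            (fun k => Ioo (η * w k - η) (η * w k + 2 * η))) := measure_biUnion_finset_le _ _
        _ = ∑ w ∈ SF, ENNReal.ofReal (3 * η) ^ d := by
            apply Finset.sum_congr rfl
            intro w _
            rw [volume_pi_pi]
            have : ∀ k : Fin d, volume (Ioo (η * w k - η) (η * w k + 2 * η))
                = ENNReal.ofReal (3 * η) := by
              intro k; rw [Real.volume_Ioo]; congr 1; ring
            simp only [this]
            rw [Finset.prod_const, Finset.card_univ, Fintype.card_fin]
        _ = (SF.card : ℝ≥0∞) * ENNReal.ofReal (3 * η) ^ d := by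
            rw [Finset.sum_const, nsmul_eq_mul]
    have hfin : (SF.card : ℝ≥0∞) * ENNReal.ofReal (3 * η) ^ d ≠ ⊤ :=
      ENNReal.mul_ne_top (ENNReal.natCast_ne_top _) (ENNReal.pow_ne_top ENNReal.ofReal_ne_top)
    have := ENNReal.toReal_mono hfin hv1
    rwa [ENNReal.toReal_mul, ENNReal.toReal_pow, ENNReal.toReal_natCast,
      ENNReal.toReal_ofReal (by positivity)] at this
  -- grid injection
  set j0 : (Fin d → ℤ) → Fin d → ℤ := fun w k => ⌈(n : ℝ) * (η * w k) - 1/2⌉ with hj0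
  -- coordinate bounds
  have hcb : ∀ w : Fin d → ℤ, ∀ t : Fin d → Fin m, ∀ k,
      η * w k ≤ ((j0 w k + (t k : ℤ) : ℤ) + 1/2 : ℝ) / n ∧
      ((j0 w k + (t k : ℤ) : ℤ) + 1/2 : ℝ) / n < η * w k + η := by
    intro w t k
    have hc1 : (n : ℝ) * (η * w k) - 1/2 ≤ (j0 w k : ℝ) := Int.le_ceil _
    have hc2 : (j0 w k : ℝ) < (n : ℝ) * (η * w k) - 1/2 + 1 := Int.ceil_lt_add_one _
    have ht0 : (0 : ℝ) ≤ ((t k : ℕ) : ℝ) := by positivity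
    have htm : ((t k : ℕ) : ℝ) ≤ (m : ℝ) - 1 := by
      have h := (t k).2
      have h2 : ((t k : ℕ) : ℝ) + 1 ≤ (m : ℝ) := by exact_mod_cast Nat.succ_le_of_lt h
      linarith
    push_cast
    constructor
    · rw [le_div_iff₀ hn0]
      linarith
    · rw [div_lt_iff₀ hn0]
      have hexp : (η * (w k : ℝ) + η) * n = n * (η * (w k : ℝ)) + n * η := by ring
      rw [hexp]
      linarith [hmle]
  -- the real point associated to (w, t) lies in A whenever w ∈ SF
  have hvA : ∀ w ∈ SF, ∀ t : Fin d → Fin m,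
      (fun k => (((j0 w k + (t k : ℤ) : ℤ) : ℝ) + 1/2) / n) ∈ A := by
    intro w hw t
    rw [hSF, Set.Finite.mem_toFinset] at hw
    obtain ⟨y, hyA, hfy⟩ := hw
    rw [hA, Metric.mem_thickening_iff]
    refine ⟨y, hyA, ?_⟩
    rw [dist_pi_lt_iff hη0]
    intro k
    have h1 := hcb w t k
    have h2 := hanchor y k
    rw [hfy] at h2
    rw [Real.dist_eq, abs_lt]
    constructor <;> nlinarith [h1.1, h1.2, h2.1, h2.2]
  -- hence the integer coordinates are valid grid indices
  have hjvalid : ∀ w ∈ SF, ∀ t : Fin d → Fin m, ∀ k,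
      0 ≤ j0 w k + (t k : ℤ) ∧ j0 w k + (t k : ℤ) < n := by
    intro w hw t k
    have h := hAsub _ (hvA w hw t) k
    simp only [mem_Ioo] at h
    set j : ℤ := j0 w k + (t k : ℤ) with hj
    have hpos : (0 : ℝ) < ((j : ℝ) + 1/2) / n := h.1
    have hlt : ((j : ℝ) + 1/2) / n < 1 := h.2
    constructor
    · by_contra hneg
      push_neg at hneg
      have : (j : ℝ) ≤ -1 := by exact_mod_cast Int.le_sub_one_of_lt hneg
      have : ((j : ℝ) + 1/2) / n < 0 := div_neg_of_neg_of_pos (by linarith) hn0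
      linarith
    · by_contra hge
      push_neg at hge
      have : (n : ℝ) ≤ (j : ℝ) := by exact_mod_cast hge
      rw [div_lt_one hn0] at hlt
      linarith
  -- the map into grid points
  set Φ : (Fin d → ℤ) × (Fin d → Fin m) → (Fin d → Fin n) := fun wt k =>
    if h : 0 ≤ j0 wt.1 k + (wt.2 k : ℤ) ∧ j0 wt.1 k + (wt.2 k : ℤ) < n then
      ⟨(j0 wt.1 k + (wt.2 k : ℤ)).toNat, by omega⟩
    else ⟨0, by omega⟩ with hΦ
  have hΦcoord : ∀ w ∈ SF, ∀ t : Fin d → Fin m,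
      dpt d n (Φ (w, t)) = fun k => (((j0 w k + (t k : ℤ) : ℤ) : ℝ) + 1/2) / n := by
    intro w hw t
    funext k
    have hv := hjvalid w hw t k
    show (((Φ (w, t) k : ℕ) : ℝ) + 1/2) / n = _
    rw [hΦ]
    simp only [hv, and_self, dif_pos, dite_eq_ite, if_true]
    congr 2
    have : ((j0 w k + (t k : ℤ)).toNat : ℤ) = j0 w k + (t k : ℤ) := Int.toNat_of_nonneg hv.1
    exact_mod_cast this
  have hΦA : ∀ wt ∈ SF ×ˢ (Finset.univ : Finset (Fin d → Fin m)), dpt d n (Φ wt) ∈ A := by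
    rintro ⟨w, t⟩ hwt
    rw [Finset.mem_product] at hwt
    rw [hΦcoord w hwt.1 t]
    exact hvA w hwt.1 t
  -- injectivity
  have hΦinj : Set.InjOn Φ ↑(SF ×ˢ (Finset.univ : Finset (Fin d → Fin m))) := by
    rintro ⟨w, t⟩ hwt ⟨w', t'⟩ hwt' heq
    rw [Finset.mem_coe, Finset.mem_product] at hwt hwt'
    have h1 : dpt d n (Φ (w, t)) = dpt d n (Φ (w', t')) := by rw [heq]
    rw [hΦcoord w hwt.1 t, hΦcoord w' hwt'.1 t'] at h1
    have hco : ∀ k, (((j0 w k + (t k : ℤ) : ℤ) : ℝ) + 1/2) / n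
        = (((j0 w' k + (t' k : ℤ) : ℤ) : ℝ) + 1/2) / n := fun k => congrFun h1 k
    have hww : w = w' := by
      funext k
      have hb := hcb w t k
      have hb' := hcb w' t' k
      rw [hco k] at hb
      -- now the same real x satisfies η w k ≤ x < η w k + η and same for w'
      by_contra hne
      rcases lt_or_gt_of_ne hne with h | h
      · have h4 : (w k : ℝ) + 1 ≤ (w' k : ℝ) := by exact_mod_cast Int.add_one_le_of_lt h
        have h5 : η * ((w k : ℝ) + 1) ≤ η * (w' k : ℝ) :=
          mul_le_mul_of_nonneg_left h4 hη0.le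
        have h6 : η * ((w k : ℝ) + 1) = η * (w k : ℝ) + η := by ring
        linarith [hb.1, hb.2, hb'.1, hb'.2]
      · have h4 : (w' k : ℝ) + 1 ≤ (w k : ℝ) := by exact_mod_cast Int.add_one_le_of_lt h
        have h5 : η * ((w' k : ℝ) + 1) ≤ η * (w k : ℝ) :=
          mul_le_mul_of_nonneg_left h4 hη0.le
        have h6 : η * ((w' k : ℝ) + 1) = η * (w' k : ℝ) + η := by ring
        linarith [hb.1, hb.2, hb'.1, hb'.2]
    subst hww
    have htt : t = t' := by
      funext k
      have := hco k
      rw [div_left_inj' (ne_of_gt hn0)] at this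
      have : ((t k : ℤ) : ℝ) = ((t' k : ℤ) : ℝ) := by
        push_cast at this ⊢
        linarith
      have : (t k : ℤ) = (t' k : ℤ) := by exact_mod_cast this
      have : (t k : ℕ) = (t' k : ℕ) := by exact_mod_cast this
      exact Fin.ext this
    rw [htt]
  -- counting
  have hcount : (SF.card : ℝ) * (m : ℝ) ^ d ≤ (Nat.card {i : Fin d → Fin n // dpt d n i ∈ A} : ℝ) := by
    have hle : (SF ×ˢ (Finset.univ : Finset (Fin d → Fin m))).card ≤
        (Finset.univ.filter (fun i : Fin d → Fin n => dpt d n i ∈ A)).card := by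
      apply Finset.card_le_card_of_injOn Φ
      · intro wt hwt
        rw [Finset.mem_coe, Finset.mem_filter]
        exact ⟨Finset.mem_univ _, hΦA wt hwt⟩
      · exact hΦinj
    have hprod : (SF ×ˢ (Finset.univ : Finset (Fin d → Fin m))).card = SF.card * m ^ d := by
      rw [Finset.card_product, Finset.card_univ]
      congr 1
      simp [Fintype.card_pi]
    have hNc : Nat.card {i : Fin d → Fin n // dpt d n i ∈ A}
        = (Finset.univ.filter (fun i : Fin d → Fin n => dpt d n i ∈ A)).card := by
      simp [Nat.card_eq_fintype_card, Fintype.card_subtype]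
    rw [hNc]
    exact_mod_cast hprod ▸ hle
  -- combine
  clear hΦcoord hΦA hΦinj hjvalid hvA hcb hΦ
  clear Φ
  clear hcover hanchor hj0
  clear j0
  clear hA hAsub hA' hη₁
  clear_value SF
  clear hSF hSfin
  clear_value S f
  clear hS hf S f
  clear_value m
  clear hm hm4 hm0 hmgt hmle hnη hn
  have step1 : (n : ℝ) ^ d * (volume A).toReal ≤ (SF.card : ℝ) * ((n : ℝ) * (3 * η)) ^ d := by
    rw [mul_pow]
    calc (n : ℝ) ^ d * (volume A).toReal ≤ (n : ℝ) ^ d * ((SF.card : ℝ) * (3 * η) ^ d) := by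
          apply mul_le_mul_of_nonneg_left hvolA (by positivity)
      _ = (SF.card : ℝ) * ((n : ℝ) ^ d * (3 * η) ^ d) := by ring
  have step2 : ((n : ℝ) * (3 * η)) ^ d ≤ (4 * (m : ℝ)) ^ d := by
    exact pow_le_pow_left₀ (by positivity) (by linarith) d
  calc (n : ℝ) ^ d * (volume A).toReal ≤ (SF.card : ℝ) * ((n : ℝ) * (3 * η)) ^ d := step1
    _ ≤ (SF.card : ℝ) * (4 * (m : ℝ)) ^ d := by
        apply mul_le_mul_of_nonneg_left step2 (by positivity)
    _ = 4 ^ d * ((SF.card : ℝ) * (m : ℝ) ^ d) := by rw [mul_pow]; ring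
    _ ≤ 4 ^ d * (Nat.card {i : Fin d → Fin n // dpt d n i ∈ A} : ℝ) := by
        apply mul_le_mul_of_nonneg_left hcount (by positivity)
    _ ≤ 8 ^ d * (Nat.card {i : Fin d → Fin n // dpt d n i ∈ A} : ℝ) := by
        apply mul_le_mul_of_nonneg_right (pow_le_pow_left₀ (by norm_num) (by norm_num) d)
        positivity


theorem count_grid_points_in_thickening
    (d n : ℕ) (hd : 1 ≤ d) (hn : 4 ≤ n)
    (A' : Set (Fin d → ℝ)) (hA' : ∀ x ∈ A', ∀ k, x k ∈ Set.Ioo (0 : ℝ) 1)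
    (η : ℝ) (hη₁ : 4 / (n : ℝ) ≤ η) (hη₂ : η ≤ 1)
    (A : Set (Fin d → ℝ)) (hA : A = Metric.thickening η A')
    (hAsub : ∀ x ∈ A, ∀ k, x k ∈ Set.Ioo (0 : ℝ) 1) :
    ((8 : ℝ) ^ d)⁻¹ * (n : ℝ) ^ d * (volume A).toReal ≤
        (Nat.card {i : Fin d → Fin n // dpt d n i ∈ A} : ℝ) ∧
      (Nat.card {i : Fin d → Fin n // dpt d n i ∈ A} : ℝ) ≤
        (4 : ℝ) ^ d * (n : ℝ) ^ d * (volume A).toReal := by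
  have hn0 : (0 : ℝ) < n := by positivity
  have hAvol : volume A ≠ ⊤ := by
    have hsub : A ⊆ Set.pi univ (fun _ : Fin d => Ioo (0 : ℝ) 1) := by
      intro x hx k _
      exact hAsub x hx k
    have hle : volume A ≤ volume (Set.pi univ (fun _ : Fin d => Ioo (0 : ℝ) 1)) :=
      measure_mono hsub
    have hv1 : volume (Set.pi univ (fun _ : Fin d => Ioo (0 : ℝ) 1)) = 1 := by
      rw [volume_pi_pi]
      simp [Real.volume_Ioo]
    rw [hv1] at hle
    exact ne_top_of_le_ne_top ENNReal.one_ne_top hle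
  constructor
  · -- lower bound
    have key := lower_core d n hn A' hA' η hη₁ A hA hAsub
    have h8 : (0 : ℝ) < 8 ^ d := by positivity
    calc ((8 : ℝ) ^ d)⁻¹ * (n : ℝ) ^ d * (volume A).toReal
        = ((8 : ℝ) ^ d)⁻¹ * ((n : ℝ) ^ d * (volume A).toReal) := by ring
      _ ≤ ((8 : ℝ) ^ d)⁻¹ * (8 ^ d * (Nat.card {i : Fin d → Fin n // dpt d n i ∈ A} : ℝ)) := by
          apply mul_le_mul_of_nonneg_left key (by positivity)
      _ = (Nat.card {i : Fin d → Fin n // dpt d n i ∈ A} : ℝ) := by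
          field_simp
  · -- upper bound
    have key := upper_core d n hn A' η hη₁ A hA hAvol
    have h2n : (0 : ℝ) < ((2 : ℝ) * n) ^ d := by positivity
    have hone : ((1 : ℝ) / (2 * n)) ^ d * (2 * n) ^ d = 1 := by
      rw [← mul_pow]
      field_simp
      exact one_pow d
    have hVnn : (0 : ℝ) ≤ (volume A).toReal := ENNReal.toReal_nonneg
    calc (Nat.card {i : Fin d → Fin n // dpt d n i ∈ A} : ℝ)
        = ((Nat.card {i : Fin d → Fin n // dpt d n i ∈ A} : ℝ) * (1 / (2 * n)) ^ d)
            * (2 * n) ^ d := by rw [mul_assoc, hone, mul_one]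
      _ ≤ (volume A).toReal * (2 * n) ^ d := mul_le_mul_of_nonneg_right key h2n.le
      _ = 2 ^ d * (n : ℝ) ^ d * (volume A).toReal := by rw [mul_pow]; ring
      _ ≤ 4 ^ d * (n : ℝ) ^ d * (volume A).toReal := by
          have h24 : (2 : ℝ) ^ d ≤ 4 ^ d := pow_le_pow_left₀ (by norm_num) (by norm_num) d
          have hnp : (0 : ℝ) ≤ (n : ℝ) ^ d := by positivity
          have := mul_le_mul_of_nonneg_right
            (mul_le_mul_of_nonneg_right h24 hnp) hVnn
          linarith

end
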